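/- For every integer d ≥ 1, the average effective resistance of the hypercube satisfies the recursion R_ave(Q_d) = (1/2)·R_ave(Q_{d−1}) + (1/(2d))·(1 − 1/2^d), where R_ave(Q_0) = 0; consequently R_ave(Q_d) = (1/2^{d+1})·Σ_{i=1}^{d} (2^i − 1)/i. -/

import Mathlib

open Real Finset

/-- Average effective resistance of the `d`-dimensional hypercube `Q_d`. -/
noncomputable def RaveHyp (d : ℕ) : ℝ :=
  (1 / 2 ^ d) * ∑ m ∈ Finset.Icc 1 d, (1 / (2 * (m : ℝ))) * (d.choose m)

lemma hIcc (n : ℕ) (f : ℕ → ℝ) :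
    ∑ m ∈ Finset.Icc 1 n, f m = ∑ i ∈ Finset.range n, f (1 + i) := by
  rw [← Finset.Ico_add_one_right_eq_Icc, Finset.sum_Ico_eq_sum_range]
  simp

lemma chooseRowSum (d : ℕ) :
    ∑ i ∈ Finset.range (d + 1), ((d + 1).choose (1 + i) : ℝ) = 2 ^ (d + 1) - 1 := by
  have h := Nat.sum_range_choose (d + 1)
  have h2 : ∑ j ∈ Finset.range (d + 2), ((d + 1).choose j : ℝ) = 2 ^ (d + 1) := by
    rw [← Nat.cast_sum]
    rw [h]
    push_cast
    ring
  rw [Finset.sum_range_succ'] at h2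
  simp only [add_comm] at h2 ⊢
  simp only [Nat.choose_zero_right, Nat.cast_one] at h2
  linarith [h2]

lemma keysum (d : ℕ) :
    ∑ m ∈ Finset.Icc 1 d, (d.choose m : ℝ) / m
      = ∑ i ∈ Finset.Icc 1 d, ((2 : ℝ) ^ i - 1) / i := by
  induction d with
  | zero => simp
  | succ d ih =>
    rw [hIcc (d + 1)]
    simp only [Nat.cast_add, Nat.cast_one]
    have hsplit : ∀ i ∈ Finset.range (d + 1),
        (((d + 1).choose (1 + i) : ℝ)) / (1 + i)
          = (d.choose i : ℝ) / (1 + i) + (d.choose (1 + i) : ℝ) / (1 + i) := by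
      intro i _
      rw [add_comm 1 i, Nat.choose_succ_succ]
      push_cast
      ring
    rw [Finset.sum_congr rfl hsplit, Finset.sum_add_distrib]
    have hA : ∑ i ∈ Finset.range (d + 1), (d.choose i : ℝ) / (1 + i)
        = (2 ^ (d + 1) - 1) / (d + 1) := by
      have hterm : ∀ i ∈ Finset.range (d + 1),
          (d.choose i : ℝ) / (1 + i) = ((d + 1).choose (1 + i) : ℝ) / (d + 1) := by
        intro i _
        have h := Nat.add_one_mul_choose_eq d i
        have h' : ((d + 1 : ℕ) : ℝ) * (d.choose i : ℝ) = ((d + 1).choose (i + 1) : ℝ) * ((i + 1 : ℕ) : ℝ) := by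
          exact_mod_cast congrArg (Nat.cast : ℕ → ℝ) h
        push_cast at h'
        rw [add_comm 1 i]
        rw [div_eq_div_iff (by positivity) (by positivity)]
        linarith [h']
      rw [Finset.sum_congr rfl hterm, ← Finset.sum_div, chooseRowSum]
    have hB : ∑ i ∈ Finset.range (d + 1), (d.choose (1 + i) : ℝ) / (1 + i)
        = ∑ i ∈ Finset.Icc 1 d, ((2 : ℝ) ^ i - 1) / i := by
      rw [Finset.sum_range_succ]
      have : (d.choose (1 + d) : ℝ) = 0 := by
        rw [Nat.choose_eq_zero_of_lt (by omega)]; simp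
      rw [this]
      have h := hIcc d (fun m => (d.choose m : ℝ) / m)
      simp only [Nat.cast_add, Nat.cast_one] at h
      rw [← h]
      simpa using ih
    rw [hA, hB, Finset.sum_Icc_succ_top (by omega : 1 ≤ d + 1)]
    push_cast
    ring

lemma rave_eq (d : ℕ) :
    RaveHyp d = (1 / 2 ^ (d + 1)) * ∑ i ∈ Finset.Icc 1 d, ((2 : ℝ) ^ i - 1) / i := by
  rw [RaveHyp, ← keysum]
  rw [Finset.mul_sum, Finset.mul_sum]
  apply Finset.sum_congr rfl
  intro m hm
  have hm1 : 1 ≤ m := (Finset.mem_Icc.mp hm).1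
  have : (m : ℝ) ≠ 0 := by positivity
  field_simp
  ring

theorem hypercube_recursion (d : ℕ) (hd : 1 ≤ d) :
    RaveHyp d = (1 / 2) * RaveHyp (d - 1) + (1 / (2 * (d : ℝ))) * (1 - 1 / 2 ^ d) ∧
    RaveHyp d = (1 / 2 ^ (d + 1)) * ∑ i ∈ Finset.Icc 1 d, ((2 : ℝ) ^ i - 1) / i := by
  refine ⟨?_, rave_eq d⟩
  obtain ⟨e, rfl⟩ : ∃ e, d = e + 1 := ⟨d - 1, by omega⟩
  rw [rave_eq, rave_eq, Nat.add_sub_cancel,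
    Finset.sum_Icc_succ_top (by omega : 1 ≤ e + 1)]
  have h1 : ((e : ℝ) + 1) ≠ 0 := by positivity
  have h2 : (2 : ℝ) ^ (e + 1) ≠ 0 := by positivity
  push_cast
  field_simp
  ring
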